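/- For every k ≥ 1 and m ≥ 1, the exponential generating function F_k^(m)(x) = Σ_{n≥k} S^(m)(n,k) · x^n/n! of the m-th order Stirling numbers satisfies the composition recurrence F_k^(m+1)(x) = F_k^(m)(exp(x) − 1) as formal power series over ℚ, where the right-hand side is the substitution of the constant-term-zero power series exp(x) − 1 into F_k^(m). -/

import Mathlib

/-- `m`-th order ("hyper") partitions of a finite set `s`:
a chain `(P₁, …, P_m)` where `P₁` is a partition of `s` and each `P_{j+1}`
is a partition of the set of blocks of `P_j`. For `m = 0` it is `s` itself
(a single trivial object). -/
def HyperPartition : (m : ℕ) → {α : Type} → [DecidableEq α] → Finset α → Type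
  | 0, _, _, _ => PUnit
  | m + 1, _, _, s => (P : Finpartition s) × HyperPartition m P.parts

/-- The number of blocks of the outermost partition of a hyper partition
(for `m = 0`, by convention, the cardinality of the underlying set). -/
def HyperPartition.outerBlocks :
    (m : ℕ) → {α : Type} → [DecidableEq α] → {s : Finset α} →
      HyperPartition m s → ℕ
  | 0, _, _, s, _ => s.card
  | 1, _, _, _, p => p.1.parts.card
  | m + 2, _, _, _, p => HyperPartition.outerBlocks (m + 1) p.2

/-- `|℘ₙ^(m)|`: the number of `m`-th order partitions of an `n`-element set. -/
noncomputable def hyperBell (m n : ℕ) : ℕ :=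
  Nat.card (HyperPartition m (Finset.univ : Finset (Fin n)))

/-- The `m`-th order Stirling number `S^(m)(n,k)`: the number of `m`-th order
partitions of an `n`-element set whose outermost partition has exactly `k` blocks. -/
noncomputable def hyperStirling (m n k : ℕ) : ℕ :=
  Nat.card {p : HyperPartition m (Finset.univ : Finset (Fin n)) //
    HyperPartition.outerBlocks m p = k}

/-- The ordinary Stirling number of the second kind `S(n,k)`: the number of
set partitions of an `n`-element set into exactly `k` blocks. -/
noncomputable def stirling (n k : ℕ) : ℕ :=
  Nat.card {P : Finpartition (Finset.univ : Finset (Fin n)) // P.parts.card = k}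

/-- Composition `f(g(x))` of formal power series (intended for `g` with zero
constant term, in which case `coeff n (g ^ i) = 0` for `i > n`). -/
noncomputable def psComp (f g : PowerSeries ℚ) : PowerSeries ℚ :=
  PowerSeries.mk fun n =>
    PowerSeries.coeff n
      (∑ i ∈ Finset.range (n + 1), PowerSeries.C (PowerSeries.coeff i f) * g ^ i)

/-- The iterated exponential series: `E₀ = exp x`, `E_{m+1} = exp (E_m - 1)`. -/
noncomputable def E : ℕ → PowerSeries ℚ
  | 0 => PowerSeries.exp ℚ
  | m + 1 => psComp (PowerSeries.exp ℚ) (E m - 1)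

/-- The `m`-th order Bell number `Bₙ^(m) = n! · [xⁿ] E_m(x)`. -/
noncomputable def bell (m n : ℕ) : ℚ :=
  (n.factorial : ℚ) * PowerSeries.coeff n (E m)


section Aux
open Finset

variable {α β : Type} [DecidableEq α] [DecidableEq β]

/-- Image of a subset of `s` under a bijection `↥s ≃ ↥t`. -/
def bimg {s : Finset α} {t : Finset β} (e : ↥s ≃ ↥t) (B : Finset α) : Finset β :=
  (t.attach.filter fun b => (↑(e.symm b) : α) ∈ B).image Subtype.val

theorem mem_bimg {s : Finset α} {t : Finset β} (e : ↥s ≃ ↥t) {B : Finset α} {b : β} :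
    b ∈ bimg e B ↔ ∃ hb : b ∈ t, (↑(e.symm ⟨b, hb⟩) : α) ∈ B := by
  constructor
  · rintro h
    simp only [bimg, mem_image, mem_filter, mem_attach, true_and] at h
    obtain ⟨x, hx, rfl⟩ := h
    exact ⟨x.2, hx⟩
  · rintro ⟨hb, h⟩
    simp only [bimg, mem_image, mem_filter, mem_attach, true_and]
    exact ⟨⟨b, hb⟩, h, rfl⟩

theorem bimg_subset {s : Finset α} {t : Finset β} (e : ↥s ≃ ↥t) (B : Finset α) :
    bimg e B ⊆ t := by
  intro b hb
  exact ((mem_bimg e).1 hb).1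

theorem mem_bimg_apply {s : Finset α} {t : Finset β} (e : ↥s ≃ ↥t) {B : Finset α} {a : α}
    (ha : a ∈ s) : (↑(e ⟨a, ha⟩) : β) ∈ bimg e B ↔ a ∈ B := by
  rw [mem_bimg]
  constructor
  · rintro ⟨hb, h⟩
    simpa using h
  · intro h
    exact ⟨(e ⟨a, ha⟩).2, by simpa using h⟩

theorem bimg_bimg {s : Finset α} {t : Finset β} (e : ↥s ≃ ↥t) {B : Finset α} (hB : B ⊆ s) :
    bimg e.symm (bimg e B) = B := by
  ext a
  rw [mem_bimg]
  constructor
  · rintro ⟨ha, h⟩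
    rw [Equiv.symm_symm] at h
    rwa [mem_bimg_apply e ha] at h
  · intro h
    refine ⟨hB h, ?_⟩
    rw [Equiv.symm_symm]
    rwa [mem_bimg_apply e (hB h)]

theorem bimg_nonempty {s : Finset α} {t : Finset β} (e : ↥s ≃ ↥t) {B : Finset α}
    (hB : B ⊆ s) (h : B.Nonempty) : (bimg e B).Nonempty := by
  obtain ⟨a, ha⟩ := h
  exact ⟨_, (mem_bimg_apply e (hB ha)).2 ha⟩

theorem bimg_disjoint {s : Finset α} {t : Finset β} (e : ↥s ≃ ↥t) {B C : Finset α}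
    (h : Disjoint B C) : Disjoint (bimg e B) (bimg e C) := by
  rw [Finset.disjoint_left] at h ⊢
  intro b hb hc
  obtain ⟨hbt, hB⟩ := (mem_bimg e).1 hb
  obtain ⟨hbt', hC⟩ := (mem_bimg e).1 hc
  exact h hB hC

/-- Transport of a finpartition along a bijection of underlying sets. -/
def fpMap {s : Finset α} {t : Finset β} (e : ↥s ≃ ↥t) (P : Finpartition s) :
    Finpartition t where
  parts := P.parts.image (bimg e)
  supIndep := by
    rw [Finset.supIndep_iff_pairwiseDisjoint]
    rintro x hx y hy hxy
    simp only [coe_image, Set.mem_image, mem_coe] at hx hy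
    obtain ⟨B, hB, rfl⟩ := hx
    obtain ⟨C, hC, rfl⟩ := hy
    have hBC : B ≠ C := fun h => hxy (by rw [h])
    exact bimg_disjoint e (P.disjoint hB hC hBC)
  sup_parts := by
    ext b
    rw [Finset.mem_sup]
    constructor
    · rintro ⟨B, hB, hb⟩
      simp only [mem_image] at hB
      obtain ⟨C, hC, rfl⟩ := hB
      exact bimg_subset e C hb
    · intro hb
      obtain ⟨B, hB, haB⟩ := P.exists_mem (a := (↑(e.symm ⟨b, hb⟩) : α)) (e.symm ⟨b, hb⟩).2
      refine ⟨bimg e B, mem_image_of_mem _ hB, ?_⟩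
      show b ∈ bimg e B
      rw [mem_bimg]
      exact ⟨hb, haB⟩
  bot_notMem := by
    simp only [bot_eq_empty, mem_image]
    rintro ⟨B, hB, h⟩
    obtain ⟨b, hb⟩ := bimg_nonempty e (P.le hB) (P.nonempty_of_mem_parts hB)
    rw [h] at hb
    exact Finset.notMem_empty _ hb

theorem fpMap_parts {s : Finset α} {t : Finset β} (e : ↥s ≃ ↥t) (P : Finpartition s) :
    (fpMap e P).parts = P.parts.image (bimg e) := rfl

theorem bimg_injOn {s : Finset α} {t : Finset β} (e : ↥s ≃ ↥t) (P : Finpartition s) :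
    Set.InjOn (bimg e) P.parts := by
  intro B hB C hC h
  have := congrArg (bimg e.symm) h
  rwa [bimg_bimg e (P.le hB), bimg_bimg e (P.le hC)] at this

theorem fpMap_parts_card {s : Finset α} {t : Finset β} (e : ↥s ≃ ↥t) (P : Finpartition s) :
    (fpMap e P).parts.card = P.parts.card :=
  Finset.card_image_of_injOn (bimg_injOn e P)

theorem fpMap_fpMap {s : Finset α} {t : Finset β} (e : ↥s ≃ ↥t) (P : Finpartition s) :
    fpMap e.symm (fpMap e P) = P := by
  ext B
  simp only [fpMap_parts, mem_image]
  constructor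
  · rintro ⟨C, hC, rfl⟩
    obtain ⟨D, hD, rfl⟩ := hC
    rwa [bimg_bimg e (P.le hD)]
  · intro hB
    exact ⟨bimg e B, ⟨B, hB, rfl⟩, bimg_bimg e (P.le hB)⟩

/-- Transport equivalence of finpartitions. -/
def fpEquiv {s : Finset α} {t : Finset β} (e : ↥s ≃ ↥t) :
    Finpartition s ≃ Finpartition t where
  toFun := fpMap e
  invFun := fpMap e.symm
  left_inv := fpMap_fpMap e
  right_inv := fun Q => by
    have h := fpMap_fpMap e.symm Q
    rwa [Equiv.symm_symm] at h

/-- The induced equivalence between the sets of parts. -/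
def partsEquiv {s : Finset α} {t : Finset β} (e : ↥s ≃ ↥t) (P : Finpartition s) :
    ↥P.parts ≃ ↥(fpMap e P).parts where
  toFun := fun B => ⟨bimg e B.1, mem_image_of_mem _ B.2⟩
  invFun := fun C => ⟨bimg e.symm C.1, by
    obtain ⟨B, hB, h⟩ := mem_image.1 C.2
    rw [← h, bimg_bimg e (P.le hB)]
    exact hB⟩
  left_inv := fun B => Subtype.ext (bimg_bimg e (P.le B.2))
  right_inv := fun C => Subtype.ext (by
    obtain ⟨B, hB, h⟩ := mem_image.1 C.2
    have := bimg_bimg e.symm (B := (C : Finset β)) ((fpMap e P).le C.2)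
    rwa [Equiv.symm_symm] at this)

def hpFiniteAux : ∀ (m : ℕ) {α : Type} [DecidableEq α] (s : Finset α),
    Finite (HyperPartition m s)
  | 0, _, _, s => by unfold HyperPartition; exact inferInstanceAs (Finite PUnit.{1})
  | m + 1, α, _, s => by
    haveI : ∀ P : Finpartition s, Finite (HyperPartition m P.parts) :=
      fun P => hpFiniteAux m P.parts
    unfold HyperPartition
    exact inferInstanceAs (Finite ((P : Finpartition s) × HyperPartition m P.parts))

instance {m : ℕ} {α : Type} [DecidableEq α] {s : Finset α} : Finite (HyperPartition m s) :=
  hpFiniteAux m s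

/-- Transport of hyper partitions along a bijection of underlying sets. -/
def hpEquiv : ∀ (m : ℕ) {α β : Type} [DecidableEq α] [DecidableEq β] {s : Finset α}
    {t : Finset β}, (↥s ≃ ↥t) → (HyperPartition m s ≃ HyperPartition m t)
  | 0, _, _, _, _, _, _, _ => Equiv.refl PUnit
  | m + 1, _, _, _, _, _, _, e =>
    Equiv.sigmaCongr (fpEquiv e) fun P => hpEquiv m (partsEquiv e P)

theorem outer_succ {m : ℕ} {α : Type} [DecidableEq α] {s : Finset α}
    (p : HyperPartition (m + 2) s) :
    HyperPartition.outerBlocks (m + 2) p = HyperPartition.outerBlocks (m + 1) p.2 := rfl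

theorem hpEquiv_succ {m : ℕ} {α β : Type} [DecidableEq α] [DecidableEq β] {s : Finset α}
    {t : Finset β} (e : ↥s ≃ ↥t) (p : HyperPartition (m + 1) s) :
    hpEquiv (m + 1) e p = ⟨fpMap e p.1, hpEquiv m (partsEquiv e p.1) p.2⟩ := rfl

theorem outer_hpEquiv : ∀ (m : ℕ) {α β : Type} [DecidableEq α] [DecidableEq β] {s : Finset α}
    {t : Finset β} (e : ↥s ≃ ↥t) (p : HyperPartition m s),
    HyperPartition.outerBlocks m (hpEquiv m e p) = HyperPartition.outerBlocks m p
  | 0, α, β, _, _, s, t, e, p => by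
    show t.card = s.card
    rw [← Fintype.card_coe, ← Fintype.card_coe]
    exact (Fintype.card_congr e).symm
  | 1, _, _, _, _, _, _, e, p => by
    rw [hpEquiv_succ]
    show (fpMap e p.1).parts.card = p.1.parts.card
    exact fpMap_parts_card e p.1
  | m + 2, _, _, _, _, _, _, e, p => by
    rw [hpEquiv_succ, outer_succ]
    exact outer_hpEquiv (m + 1) (partsEquiv e p.1) p.2

theorem outer_le : ∀ (m : ℕ) {α : Type} [DecidableEq α] {s : Finset α}
    (p : HyperPartition (m + 1) s), HyperPartition.outerBlocks (m + 1) p ≤ s.card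
  | 0, _, _, s, p => p.1.card_parts_le_card
  | m + 1, _, _, s, p => by
    rw [outer_succ]
    exact le_trans (outer_le m p.2) p.1.card_parts_le_card

/-- The number of hyper partitions with given outer block count depends only on the
cardinality of the underlying set. -/
theorem card_outer_eq (m : ℕ) {α : Type} [DecidableEq α] (s : Finset α) (k : ℕ) :
    Nat.card {q : HyperPartition m s // HyperPartition.outerBlocks m q = k} =
      hyperStirling m s.card k := by
  have e : ↥s ≃ ↥(Finset.univ : Finset (Fin s.card)) :=
    (Fintype.equivFinOfCardEq (Fintype.card_coe s)).trans
      (Equiv.subtypeUnivEquiv fun x => Finset.mem_univ x).symm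
  exact Nat.card_congr (Equiv.subtypeEquiv (hpEquiv m e)
    (fun q => by rw [outer_hpEquiv]))

theorem hyperStirling_eq_zero {m n k : ℕ} (h : n < k) :
    hyperStirling (m + 1) n k = 0 := by
  haveI : IsEmpty {p : HyperPartition (m + 1) (Finset.univ : Finset (Fin n)) //
      HyperPartition.outerBlocks (m + 1) p = k} := by
    refine ⟨fun p => ?_⟩
    have h1 := outer_le m p.1
    rw [p.2, Finset.card_univ, Fintype.card_fin] at h1
    exact absurd h1 (not_le.2 h)
  exact Nat.card_of_isEmpty

theorem hyperStirling_succ (m n k : ℕ) :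
    hyperStirling (m + 2) n k =
      ∑ j ∈ Finset.range (n + 1), stirling n j * hyperStirling (m + 1) j k := by
  classical
  have E1 : {p : HyperPartition (m + 2) (Finset.univ : Finset (Fin n)) //
        HyperPartition.outerBlocks (m + 2) p = k} ≃
      Σ P : Finpartition (Finset.univ : Finset (Fin n)),
        {q : HyperPartition (m + 1) P.parts //
          HyperPartition.outerBlocks (m + 1) q = k} :=
    { toFun := fun p => ⟨p.1.1, p.1.2, by rw [← outer_succ]; exact p.2⟩
      invFun := fun x => ⟨⟨x.1, x.2.1⟩, by exact x.2.2⟩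
      left_inv := fun p => rfl
      right_inv := fun x => rfl }
  have h0 : hyperStirling (m + 2) n k = Nat.card {p : HyperPartition (m + 2)
      (Finset.univ : Finset (Fin n)) // HyperPartition.outerBlocks (m + 2) p = k} := rfl
  haveI : ∀ P : Finpartition (Finset.univ : Finset (Fin n)),
      Fintype {q : HyperPartition (m + 1) P.parts //
        HyperPartition.outerBlocks (m + 1) q = k} := fun P => Fintype.ofFinite _
  rw [h0, Nat.card_congr E1, Nat.card_eq_fintype_card, Fintype.card_sigma]
  have E2 : ∀ P : Finpartition (Finset.univ : Finset (Fin n)),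
      Fintype.card {q : HyperPartition (m + 1) P.parts //
        HyperPartition.outerBlocks (m + 1) q = k} =
      hyperStirling (m + 1) P.parts.card k := fun P => by
    rw [← Nat.card_eq_fintype_card, card_outer_eq]
  simp_rw [E2]
  rw [← Finset.sum_fiberwise_of_maps_to' (g := fun P : Finpartition
      (Finset.univ : Finset (Fin n)) => P.parts.card) (t := Finset.range (n + 1))
      (fun P _ => Finset.mem_range.2 (Nat.lt_succ_of_le
        (le_trans P.card_parts_le_card (le_of_eq (Finset.card_fin n)))))
      (fun j => hyperStirling (m + 1) j k)]
  refine Finset.sum_congr rfl fun j hj => ?_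
  rw [Finset.sum_const, smul_eq_mul]
  congr 1
  rw [stirling, Nat.card_eq_fintype_card, Fintype.card_subtype]

/-- The number of surjections from `Fin n` onto `Fin j`. -/
noncomputable def Surj (n j : ℕ) : ℕ :=
  Nat.card {f : Fin n → Fin j // Function.Surjective f}

theorem surj_eq (n j : ℕ) : Surj n j = j.factorial * stirling n j := by
  classical
  set Φ : (Σ _P : {P : Finpartition (Finset.univ : Finset (Fin n)) // P.parts.card = j},
        (↥_P.1.parts ≃ Fin j)) → {f : Fin n → Fin j // Function.Surjective f} :=
    fun x => ⟨fun a => x.2 ⟨x.1.1.part a, x.1.1.part_mem.2 (mem_univ a)⟩, by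
      intro i
      obtain ⟨B, hB⟩ : ∃ B : ↥x.1.1.parts, x.2 B = i := ⟨x.2.symm i, x.2.apply_symm_apply i⟩
      obtain ⟨a, ha⟩ := x.1.1.nonempty_of_mem_parts B.2
      refine ⟨a, ?_⟩
      have hpa : x.1.1.part a = B.1 := x.1.1.part_eq_of_mem B.2 ha
      show x.2 ⟨x.1.1.part a, x.1.1.part_mem.2 (mem_univ a)⟩ = i
      rw [show (⟨x.1.1.part a, x.1.1.part_mem.2 (mem_univ a)⟩ : ↥x.1.1.parts) = B from
        Subtype.ext hpa, hB]⟩ with hΦ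
  have key : ∀ (P : Finpartition (Finset.univ : Finset (Fin n))) (σ : ↥P.parts ≃ Fin j)
      (a b : Fin n), (σ ⟨P.part a, P.part_mem.2 (mem_univ a)⟩ =
        σ ⟨P.part b, P.part_mem.2 (mem_univ b)⟩) ↔ P.part a = P.part b := by
    intro P σ a b
    constructor
    · intro h
      exact congrArg Subtype.val (σ.injective h)
    · intro h
      exact congrArg σ (Subtype.ext h)
  have hinj : Function.Injective Φ := by
    rintro ⟨⟨P, hP⟩, σ⟩ ⟨⟨Q, hQ⟩, τ⟩ h
    rw [Subtype.ext_iff] at h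
    have hfun : ∀ a : Fin n, σ ⟨P.part a, P.part_mem.2 (mem_univ a)⟩ =
        τ ⟨Q.part a, Q.part_mem.2 (mem_univ a)⟩ := fun a => congrFun h a
    have hpart : ∀ a : Fin n, P.part a = Q.part a := by
      intro a
      ext b
      rw [P.mem_part_iff_part_eq_part (mem_univ b) (mem_univ a),
        Q.mem_part_iff_part_eq_part (mem_univ b) (mem_univ a),
        ← key P σ, ← key Q τ, hfun, hfun]
    have hPQ : P = Q := by
      ext B
      constructor
      · intro hB
        obtain ⟨a, _, ha⟩ := P.part_surjOn hB
        rw [← ha, hpart]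
        exact Q.part_mem.2 (mem_univ a)
      · intro hB
        obtain ⟨a, _, ha⟩ := Q.part_surjOn hB
        rw [← ha, ← hpart]
        exact P.part_mem.2 (mem_univ a)
    subst hPQ
    have hστ : σ = τ := by
      apply Equiv.ext
      rintro ⟨B, hB⟩
      obtain ⟨a, _, ha⟩ := P.part_surjOn hB
      have h1 := hfun a
      rw [show (⟨P.part a, P.part_mem.2 (mem_univ a)⟩ : ↥P.parts) = ⟨B, hB⟩ from
        Subtype.ext ha] at h1
      exact h1
    subst hστ
    rfl
  have hsurj : Function.Surjective Φ := by
    rintro ⟨f, hf⟩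
    have hfib : ∀ i : Fin j, (Finset.univ.filter fun a => f a = i) ∈
        ((Finset.univ : Finset (Fin j)).image fun i => Finset.univ.filter fun a => f a = i) :=
      fun i => mem_image_of_mem _ (mem_univ i)
    set P : Finpartition (Finset.univ : Finset (Fin n)) :=
      { parts := (Finset.univ : Finset (Fin j)).image fun i =>
          Finset.univ.filter fun a => f a = i
        supIndep := by
          rw [Finset.supIndep_iff_pairwiseDisjoint]
          rintro x hx y hy hxy
          simp only [coe_image, Set.mem_image, mem_coe] at hx hy
          obtain ⟨i, _, rfl⟩ := hx
          obtain ⟨i', _, rfl⟩ := hy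
          have : i ≠ i' := fun h => hxy (by rw [h])
          simp only [Function.onFun, id_eq, Finset.disjoint_left]
          intro a ha ha'
          simp only [id, mem_filter] at ha ha'
          exact this (ha.2.symm.trans ha'.2)
        sup_parts := by
          ext a
          rw [Finset.mem_sup]
          simp only [mem_univ, iff_true]
          exact ⟨_, mem_image_of_mem _ (mem_univ (f a)), mem_filter.2 ⟨mem_univ a, rfl⟩⟩
        bot_notMem := by
          simp only [bot_eq_empty, mem_image]
          rintro ⟨i, _, h⟩
          obtain ⟨a, ha⟩ := hf i
          have : a ∈ (∅ : Finset (Fin n)) := by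
            rw [← h]; simp [ha]
          exact Finset.notMem_empty _ this } with hPdef
    have hpart_eq : ∀ a : Fin n, P.part a = Finset.univ.filter fun b => f b = f a :=
      fun a => P.part_eq_of_mem (hfib (f a)) (by simp)
    have hne : ∀ B : ↥P.parts, B.1.Nonempty := fun B => P.nonempty_of_mem_parts B.2
    set u : ↥P.parts → Fin j := fun B => f (B.1.min' (hne B)) with hu
    have hBfib : ∀ B : ↥P.parts, B.1 = Finset.univ.filter fun a => f a = u B := by
      rintro ⟨B, hB⟩
      obtain ⟨i, _, rfl⟩ := mem_image.1 hB
      have : u ⟨_, hB⟩ = i := by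
        have := Finset.min'_mem _ (hne ⟨_, hB⟩)
        simp only [mem_filter] at this
        exact this.2
      rw [this]
    have hub : Function.Bijective u := by
      constructor
      · intro B C h
        apply Subtype.ext
        rw [hBfib B, hBfib C, h]
      · intro i
        refine ⟨⟨_, hfib i⟩, ?_⟩
        have := Finset.min'_mem _ (hne ⟨_, hfib i⟩)
        simp only [mem_filter] at this
        exact this.2
    set σ : ↥P.parts ≃ Fin j := Equiv.ofBijective u hub with hσ
    have hcard : P.parts.card = j := by
      rw [← Fintype.card_coe, Fintype.card_congr σ, Fintype.card_fin]
    refine ⟨⟨⟨P, hcard⟩, σ⟩, ?_⟩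
    apply Subtype.ext
    funext a
    show u ⟨P.part a, _⟩ = f a
    have h3 : ∀ b, b ∈ P.part a → f b = f a := fun b hb => by
      rw [hpart_eq a] at hb
      exact (mem_filter.1 hb).2
    exact h3 _ (Finset.min'_mem _ _)
  rw [Surj, ← Nat.card_eq_of_bijective Φ ⟨hinj, hsurj⟩, Nat.card_eq_fintype_card,
    Fintype.card_sigma]
  have hterm : ∀ _P : {P : Finpartition (Finset.univ : Finset (Fin n)) // P.parts.card = j},
      Fintype.card (↥_P.1.parts ≃ Fin j) = j.factorial := by
    intro _P
    have e : ↥_P.1.parts ≃ Fin j :=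
      Fintype.equivFinOfCardEq (by rw [Fintype.card_coe, _P.2])
    rw [Fintype.card_equiv e, Fintype.card_coe, _P.2]
  simp_rw [hterm]
  rw [Finset.sum_const, smul_eq_mul, stirling, Nat.card_eq_fintype_card,
    Finset.card_univ]
  exact mul_comm _ _

theorem surj_zero (n : ℕ) : Surj n 0 = if n = 0 then 1 else 0 := by
  rcases Nat.eq_zero_or_pos n with rfl | hn
  · rw [if_pos rfl]
    haveI : Unique {f : Fin 0 → Fin 0 // Function.Surjective f} :=
      { default := ⟨id, Function.surjective_id⟩
        uniq := fun a => Subtype.ext (funext fun x => x.elim0) }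
    exact Nat.card_unique
  · rw [if_neg hn.ne']
    haveI : IsEmpty {f : Fin n → Fin 0 // Function.Surjective f} :=
      ⟨fun f => (f.1 ⟨0, hn⟩).elim0⟩
    exact Nat.card_of_isEmpty

theorem surj_card_eq {n j : ℕ} (s : Finset (Fin n)) :
    Nat.card {g : ↥s → Fin j // Function.Surjective g} = Surj s.card j := by
  have e : ↥s ≃ Fin s.card := s.equivFin
  refine Nat.card_congr (Equiv.subtypeEquiv (Equiv.arrowCongr e (Equiv.refl (Fin j))) ?_)
  intro g
  show Function.Surjective g ↔ Function.Surjective (fun x => g (e.symm x))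
  exact (Function.Surjective.of_comp_iff g e.symm.surjective).symm

theorem surj_succ (n j : ℕ) :
    Surj n (j + 1) = ∑ i ∈ Finset.range n, n.choose i * Surj i j := by
  classical
  set Ψ : (Σ s : {s : Finset (Fin n) // s ≠ Finset.univ},
      {g : ↥s.1 → Fin j // Function.Surjective g}) →
      {f : Fin n → Fin (j + 1) // Function.Surjective f} :=
    fun x => ⟨fun a => if ha : a ∈ x.1.1 then (x.2.1 ⟨a, ha⟩).castSucc else Fin.last j, by
      intro i
      rcases eq_or_ne i (Fin.last j) with rfl | hi
      · have hne : ¬ ∀ a, a ∈ x.1.1 := fun h => x.1.2 (Finset.eq_univ_iff_forall.2 h)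
        obtain ⟨a, ha⟩ := not_forall.1 hne
        refine ⟨a, ?_⟩
        show (if ha' : a ∈ x.1.1 then (x.2.1 ⟨a, ha'⟩).castSucc else Fin.last j) = Fin.last j
        rw [dif_neg ha]
      · obtain ⟨b, hb⟩ := x.2.2 (i.castPred hi)
        refine ⟨b.1, ?_⟩
        show (if ha' : b.1 ∈ x.1.1 then (x.2.1 ⟨b.1, ha'⟩).castSucc else Fin.last j) = i
        rw [dif_pos b.2, show (⟨b.1, b.2⟩ : ↥x.1.1) = b from rfl, hb,
          Fin.castSucc_castPred]⟩ with hΨ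
  have hinj : Function.Injective Ψ := by
    rintro ⟨⟨s, hs⟩, g, hg⟩ ⟨⟨s', hs'⟩, g', hg'⟩ h
    rw [Subtype.ext_iff] at h
    simp only [hΨ] at h
    replace h := congrFun h
    have hss : s = s' := by
      ext a
      constructor
      · intro ha
        by_contra ha'
        have h1 := h a
        rw [dif_pos ha, dif_neg ha'] at h1
        exact (Fin.castSucc_lt_last _).ne h1
      · intro ha
        by_contra ha'
        have h1 := h a
        rw [dif_neg ha', dif_pos ha] at h1
        exact (Fin.castSucc_lt_last _).ne h1.symm
    subst hss
    have hgg : g = g' := by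
      funext b
      have h1 := h b.1
      rw [dif_pos b.2, dif_pos b.2] at h1
      exact Fin.castSucc_injective _ h1
    have h2 : (⟨g, hg⟩ : {g : ↥s → Fin j // Function.Surjective g}) = ⟨g', hg'⟩ :=
      Subtype.ext hgg
    rw [h2]
  have hsurj : Function.Surjective Ψ := by
    rintro ⟨f, hf⟩
    set s := Finset.univ.filter fun a => f a ≠ Fin.last j with hsdef
    have hmem : ∀ a, a ∈ s ↔ f a ≠ Fin.last j := fun a => by simp [hsdef]
    have hs : s ≠ Finset.univ := by
      obtain ⟨a, ha⟩ := hf (Fin.last j)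
      intro h
      exact (hmem a).1 (h ▸ mem_univ a) ha
    set g : ↥s → Fin j := fun b => (f b.1).castPred ((hmem b.1).1 b.2) with hgdef
    have hg : Function.Surjective g := by
      intro i
      obtain ⟨a, ha⟩ := hf i.castSucc
      have has : a ∈ s := (hmem a).2 (by rw [ha]; exact (Fin.castSucc_lt_last i).ne)
      refine ⟨⟨a, has⟩, ?_⟩
      simp only [hgdef]
      simp [ha]
    refine ⟨⟨⟨s, hs⟩, g, hg⟩, Subtype.ext (funext fun a => ?_)⟩
    show (if ha : a ∈ s then (g ⟨a, ha⟩).castSucc else Fin.last j) = f a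
    by_cases ha : a ∈ s
    · rw [dif_pos ha]
      exact Fin.castSucc_castPred _ _
    · rw [dif_neg ha]
      have hfa : f a = Fin.last j := by
        by_contra hne
        exact ha ((hmem a).2 hne)
      exact hfa.symm
  have h0 : Surj n (j + 1) =
      Nat.card {f : Fin n → Fin (j + 1) // Function.Surjective f} := rfl
  rw [h0, ← Nat.card_eq_of_bijective Ψ ⟨hinj, hsurj⟩, Nat.card_eq_fintype_card,
    Fintype.card_sigma]
  have hterm : ∀ s : {s : Finset (Fin n) // s ≠ Finset.univ},
      Fintype.card {g : ↥s.1 → Fin j // Function.Surjective g} = Surj s.1.card j :=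
    fun s => by rw [← Nat.card_eq_fintype_card, surj_card_eq]
  simp_rw [hterm]
  rw [← Finset.sum_subtype (Finset.univ.filter fun s : Finset (Fin n) => s ≠ Finset.univ)
    (by simp) (fun s => Surj s.card j)]
  rw [← Finset.sum_fiberwise_of_maps_to' (g := fun s : Finset (Fin n) => s.card)
      (t := Finset.range n)
      (fun s hsmem => by
        simp only [mem_filter, mem_univ, true_and] at hsmem
        refine Finset.mem_range.2 (lt_of_le_of_ne ?_ ?_)
        · exact le_of_le_of_eq (Finset.card_le_card (Finset.subset_univ s)) (Finset.card_fin n)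
        · intro h
          exact hsmem (Finset.eq_univ_of_card s (by simpa [Fintype.card_fin] using h)))
      (fun i => Surj i j)]
  refine Finset.sum_congr rfl fun i hi => ?_
  rw [Finset.sum_const, smul_eq_mul]
  congr 1
  have h1 : ((Finset.univ.filter fun s : Finset (Fin n) => s ≠ Finset.univ).filter
      fun s => s.card = i) = Finset.univ.filter fun s : Finset (Fin n) => s.card = i := by
    ext s
    simp only [Finset.mem_filter, Finset.mem_univ, true_and]
    constructor
    · rintro ⟨h1, h2⟩
      exact h2
    · intro h
      refine ⟨?_, h⟩
      intro he
      rw [he, Finset.card_fin] at h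
      rw [← h] at hi
      exact absurd hi (by simp)
  rw [h1]
  have h2 : (Finset.univ.filter fun s : Finset (Fin n) => s.card = i) =
      Finset.powersetCard i Finset.univ := by
    ext s
    simp [Finset.mem_powersetCard, Finset.subset_univ]
  rw [h2, Finset.card_powersetCard, Finset.card_fin]

theorem coeff_expm1 (i : ℕ) : PowerSeries.coeff i (PowerSeries.exp ℚ - 1) =
    if i = 0 then 0 else (1 : ℚ) / i.factorial := by
  rw [map_sub, PowerSeries.coeff_exp, PowerSeries.coeff_one]
  split_ifs with h
  · subst h; simp
  · simp

theorem coeff_expm1_pow (j n : ℕ) :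
    (n.factorial : ℚ) * PowerSeries.coeff n ((PowerSeries.exp ℚ - 1) ^ j) =
      Surj n j := by
  induction j generalizing n with
  | zero =>
    rw [pow_zero, PowerSeries.coeff_one, surj_zero]
    split_ifs with h
    · subst h; simp
    · simp
  | succ j ih =>
    rw [pow_succ, PowerSeries.coeff_mul, Finset.Nat.sum_antidiagonal_eq_sum_range_succ_mk,
      surj_succ]
    simp_rw [coeff_expm1]
    rw [Finset.sum_range_succ, Nat.sub_self, if_pos rfl, mul_zero, add_zero,
      Finset.mul_sum]
    push_cast
    refine Finset.sum_congr rfl fun i hi => ?_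
    have hi' : i < n := Finset.mem_range.1 hi
    rw [if_neg (Nat.sub_ne_zero_of_lt hi')]
    have h1 := ih i
    have hifac : (i.factorial : ℚ) ≠ 0 := Nat.cast_ne_zero.2 i.factorial_ne_zero
    have hnifac : ((n - i).factorial : ℚ) ≠ 0 := Nat.cast_ne_zero.2 (n - i).factorial_ne_zero
    have h2 : PowerSeries.coeff i ((PowerSeries.exp ℚ - 1) ^ j) =
        (Surj i j : ℚ) / i.factorial := by
      rw [← h1]
      field_simp
    rw [h2, Nat.cast_choose ℚ (le_of_lt hi')]
    field_simp

end Aux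

/-- the e.g.f. `F_k^(m)(x) = Σ_{n≥k} S^(m)(n,k) xⁿ/n!` satisfies the
composition recurrence `F_k^(m+1)(x) = F_k^(m)(exp(x) − 1)` for `k ≥ 1`, `m ≥ 1`. -/
theorem stmt19 (k m : ℕ) (hk : 1 ≤ k) (hm : 1 ≤ m) :
    (PowerSeries.mk fun n =>
        if k ≤ n then (hyperStirling (m + 1) n k : ℚ) / n.factorial else 0) =
      psComp
        (PowerSeries.mk fun n =>
          if k ≤ n then (hyperStirling m n k : ℚ) / n.factorial else 0)
        (PowerSeries.exp ℚ - 1) := by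
  obtain ⟨m', rfl⟩ : ∃ m', m = m' + 1 := ⟨m - 1, (Nat.succ_pred_eq_of_pos hm).symm⟩
  ext n
  rw [PowerSeries.coeff_mk]
  simp only [psComp, PowerSeries.coeff_mk, map_sum, PowerSeries.coeff_C_mul]
  have hfac : (n.factorial : ℚ) ≠ 0 := Nat.cast_ne_zero.2 n.factorial_ne_zero
  have hterm : ∀ i ∈ Finset.range (n + 1),
      (if k ≤ i then (hyperStirling (m' + 1) i k : ℚ) / i.factorial else 0) *
        PowerSeries.coeff n ((PowerSeries.exp ℚ - 1) ^ i) =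
      ((stirling n i * hyperStirling (m' + 1) i k : ℕ) : ℚ) / n.factorial := by
    intro i _
    have hifac : (i.factorial : ℚ) ≠ 0 := Nat.cast_ne_zero.2 i.factorial_ne_zero
    by_cases hki : k ≤ i
    · rw [if_pos hki]
      have h2 : PowerSeries.coeff n ((PowerSeries.exp ℚ - 1) ^ i) =
          (Surj n i : ℚ) / n.factorial := by
        rw [← coeff_expm1_pow i n]
        field_simp
      rw [h2, surj_eq]
      push_cast
      field_simp
    · rw [if_neg hki, hyperStirling_eq_zero (lt_of_not_ge hki)]
      simp
  rw [Finset.sum_congr rfl hterm, ← Finset.sum_div, ← Nat.cast_sum,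
    show m' + 1 + 1 = m' + 2 from rfl, ← hyperStirling_succ m' n k]
  by_cases hkn : k ≤ n
  · rw [if_pos hkn]
  · rw [if_neg hkn, hyperStirling_eq_zero (lt_of_not_ge hkn)]
    simp
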